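/- Let A be a finite-dimensional semisimple algebra over a field F with a non-degenerate trace tr : A → F. Let B ⊆ A be a unital subalgebra (containing the unit of A), and suppose there exists a conditional expectation E : A → B, i.e., a linear map with E(b a b') = b E(a) b' for all a ∈ A and b, b' ∈ B, satisfying tr ∘ E = tr. Then B is semisimple. -/

import Mathlib

/-- If `A` is a finite-dimensional semisimple algebra over `F` with a non-degenerate
trace `tr`, `B ⊆ A` is a unital subalgebra, and `E : A → B` is a conditional expectation
(`E(b a b') = b E(a) b'`) satisfying `tr ∘ E = tr`, then `B` is semisimple. -/
theorem subalgebra_semisimple_of_conditional_expectation (F : Type*) [Field F] (A : Type*)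
    [Ring A] [Algebra F A] [FiniteDimensional F A] [IsSemisimpleRing A]
    (tr : A →ₗ[F] F) (htr : ∀ a b : A, tr (a * b) = tr (b * a))
    (hnd : ∀ a : A, a ≠ 0 → ∃ b : A, tr (a * b) ≠ 0)
    (B : Subalgebra F A) (E : A →ₗ[F] B)
    (hE : ∀ (a : A) (b b' : B), E ((b : A) * a * (b' : A)) = b * E a * b')
    (htrE : ∀ a : A, tr (E a : A) = tr a) :
    IsSemisimpleRing B := by
  -- step 1 : E 1 = 1
  have hE1 : E 1 = 1 := by
    have key : ∀ c : A, tr (((E 1 : A) - 1) * c) = 0 := by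
      intro c
      have h1 : E ((E 1 : A) * c * ((1 : B) : A)) = E 1 * E c * 1 := hE c (E 1) 1
      have h2 : E (((E c : A)) * (1 : A) * ((1 : B) : A)) = E c * E 1 * 1 := hE 1 (E c) 1
      have h3 : tr ((E ((E 1 : A) * c) : A)) = tr ((E 1 : A) * c) := by
        simpa using htrE ((E 1 : A) * c)
      have h4 : tr ((E ((E c : A)) : A)) = tr ((E c : A)) := htrE _
      simp only [OneMemClass.coe_one, mul_one, one_mul] at h1 h2
      rw [h1] at h3
      rw [h2] at h4
      have h5 : tr ((E 1 : A) * c) = tr (((E 1 : B) * E c : B) : A) := h3.symm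
      have h6 : tr ((E c : A)) = tr (((E c : B) * E 1 : B) : A) := h4.symm
      have h7 : tr (((E 1 : B) * E c : B) : A) = tr (((E c : B) * E 1 : B) : A) := by
        push_cast
        exact htr _ _
      have h8 : tr ((E c : A)) = tr c := htrE c
      rw [sub_mul, map_sub, one_mul, h5, h7, ← h6, h8, sub_self]
    by_contra hne
    have hne' : ((E 1 : A) - 1) ≠ 0 := by
      intro h
      apply hne
      have : (E 1 : A) = ((1 : B) : A) := by
        rw [sub_eq_zero] at h; simpa using h
      exact Subtype.ext this
    obtain ⟨c, hc⟩ := hnd _ hne'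
    exact hc (key c)
  -- step 2 : E restricted to B is the identity
  have hEid : ∀ b : B, E (b : A) = b := by
    intro b
    have := hE 1 b 1
    simpa [hE1] using this
  -- step 3 : complemented lattice
  refine { exists_isCompl := ?_ }
  intro I
  -- the extension of I to a left ideal of A
  set I' : Submodule A A := Submodule.span A ((fun b : B => (b : A)) '' (I : Set B)) with hI'
  -- key membership property
  have hmem : ∀ a ∈ I', E a ∈ I := by
    have hle : I' ≤
        { carrier := {a : A | ∀ c : A, E (c * a) ∈ I}
          add_mem' := by
            intro a b ha hb c
            rw [mul_add, map_add]
            exact I.add_mem (ha c) (hb c)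
          zero_mem' := by intro c; simp
          smul_mem' := by
            intro r a ha c
            have : c * (r • a) = (c * r) * a := by
              rw [smul_eq_mul, mul_assoc]
            rw [this]
            exact ha (c * r) } := by
      rw [hI', Submodule.span_le]
      rintro _ ⟨x, hx, rfl⟩ c
      have h := hE c 1 x
      simp only [OneMemClass.coe_one, one_mul] at h
      rw [h]
      exact I.smul_mem (E c) hx
    intro a ha
    have := hle ha
    simpa using this 1
  -- projection in A
  obtain ⟨J, hJ⟩ := ComplementedLattice.exists_isCompl I'
  set π := I'.linearProjOfIsCompl J hJ with hπ
  -- the induced B-linear projection B → I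
  have hEmul : ∀ (c : B) (a : A), E ((c : A) * a) = c * E a := by
    intro c a
    have := hE a c 1
    simpa using this
  let f : B →ₗ[B] I :=
    { toFun := fun b => ⟨E ((π (b : A) : A)), hmem _ (π (b : A)).2⟩
      map_add' := by
        intro x y
        ext
        push_cast
        rw [map_add, Submodule.coe_add, map_add]
        rfl
      map_smul' := by
        intro c x
        ext
        have h1 : ((c • x : B) : A) = (c : A) * (x : A) := rfl
        have h2 : π ((c : A) * (x : A)) = (c : A) • π (x : A) := by
          rw [← smul_eq_mul]; exact map_smul π (c : A) (x : A)
        simp only [h1, h2, RingHom.id_apply]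
        rw [Submodule.coe_smul, smul_eq_mul, hEmul]
        rfl }
  have hproj : ∀ x : I, f (x : B) = x := by
    intro x
    have hxI' : ((x : B) : A) ∈ I' := by
      apply Submodule.subset_span
      exact ⟨(x : B), x.2, rfl⟩
    have h1 : π ((x : B) : A) = ⟨((x : B) : A), hxI'⟩ :=
      Submodule.linearProjOfIsCompl_apply_left hJ ⟨((x : B) : A), hxI'⟩
    refine Subtype.ext ?_
    show (E ((π ((x : B) : A) : A)) : B) = (x : B)
    rw [h1]
    exact hEid (x : B)
  exact ⟨LinearMap.ker f, LinearMap.isCompl_of_proj hproj⟩
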